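/- Let M, N ≥ 1 and let W₁A, W₁B ∈ ℂ^{M×N} be the per-polarization excitation matrices of a dual-polarized uniform rectangular protoarray. Define the companion matrices W₂A = −J_M · conj(W₁B) · J_N and W₂B = J_M · conj(W₁A) · J_N, and the horizontally expanded matrices WA = [W₁A , W₂A] ∈ ℂ^{M×2N}, WB = [W₁B , W₂B] ∈ ℂ^{M×2N} obtained by appending the companion to the right of the protoarray (column index n of the companion block corresponds to overall column N+n). Then for all ψy, ψz ∈ ℝ: |∑_{m<M, n<2N} (WA)_{m,n} e^{i(nψy+mψz)}|² + |∑_{m<M, n<2N} (WB)_{m,n} e^{i(nψy+mψz)}|² = 2·(|∑_{m<M, n<N} (W₁A)_{m,n} e^{i(nψy+mψz)}|² + |∑_{m<M, n<N} (W₁B)_{m,n} e^{i(nψy+mψz)}|²). -/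

import Mathlib

open Finset

/-- `(m,n)` entry of the steering matrix of an `M×N` uniform rectangular array:
`exp(i(n ψy + m ψz))`. -/
noncomputable def steerM (M N : ℕ) (ψy ψz : ℝ) : Fin M → Fin N → ℂ :=
  fun m n => Complex.exp (Complex.I * (((n : ℕ) : ℂ) * (ψy : ℂ) + ((m : ℕ) : ℂ) * (ψz : ℂ)))

/-- Radiated far field of an `M×N` array with excitation `W`:
`F(W) = ∑_{m,n} W m n · exp(i(n ψy + m ψz))`. -/
noncomputable def fieldF {M N : ℕ} (W : Fin M → Fin N → ℂ) (ψy ψz : ℝ) : ℂ :=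
  ∑ m, ∑ n, W m n * steerM M N ψy ψz m n

lemma key_abs (a b c : ℂ) (hc : c * (starRingEnd ℂ) c = 1) :
    ‖a - c * (starRingEnd ℂ) b‖ ^ 2 + ‖b + c * (starRingEnd ℂ) a‖ ^ 2
      = 2 * (‖a‖ ^ 2 + ‖b‖ ^ 2) := by
  have hc' : c.re ^ 2 + c.im ^ 2 = 1 := by
    have := congrArg Complex.re hc
    simp [Complex.mul_re, Complex.conj_re, Complex.conj_im] at this
    nlinarith [this]
  simp only [Complex.sq_norm, Complex.normSq_apply, Complex.sub_re, Complex.sub_im,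
    Complex.add_re, Complex.add_im, Complex.mul_re, Complex.mul_im,
    Complex.conj_re, Complex.conj_im]
  nlinarith [hc']

lemma unit_c' (t : ℂ) (ht : (starRingEnd ℂ) t = t) :
    Complex.exp (Complex.I * t) * (starRingEnd ℂ) (Complex.exp (Complex.I * t)) = 1 := by
  rw [← Complex.exp_conj, ← Complex.exp_add, map_mul, Complex.conj_I, ht]
  simp

lemma steer_cast (M N : ℕ) (ψy ψz : ℝ) (m : Fin M) (n : Fin N) :
    steerM M (N + N) ψy ψz m (Fin.castAdd N n) = steerM M N ψy ψz m n := rfl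

lemma steer_nat (M N : ℕ) (ψy ψz : ℝ) (m : Fin M) (n : Fin N) :
    steerM M (N + N) ψy ψz m (Fin.natAdd N n)
      = Complex.exp (Complex.I * (((N : ℕ) : ℂ) * (ψy : ℂ))) * steerM M N ψy ψz m n := by
  unfold steerM
  rw [← Complex.exp_add]
  congr 1
  push_cast [Fin.natAdd]
  ring

lemma steer_rev (M N : ℕ) (ψy ψz : ℝ) (m : Fin M) (n : Fin N) :
    steerM M N ψy ψz m.rev n.rev
      = Complex.exp (Complex.I * (((N - 1 : ℕ) : ℂ) * (ψy : ℂ) + ((M - 1 : ℕ) : ℂ) * (ψz : ℂ)))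
        * (starRingEnd ℂ) (steerM M N ψy ψz m n) := by
  unfold steerM
  rw [← Complex.exp_conj, ← Complex.exp_add]
  congr 1
  have hm : ((m.rev : ℕ) : ℂ) = ((M - 1 : ℕ) : ℂ) - (m : ℕ) := by
    rw [Fin.val_rev, Nat.cast_sub m.2,
      Nat.cast_sub (Nat.one_le_iff_ne_zero.2
        (Nat.pos_of_ne_zero (by rintro rfl; exact m.elim0)).ne')]
    push_cast; ring
  have hn : ((n.rev : ℕ) : ℂ) = ((N - 1 : ℕ) : ℂ) - (n : ℕ) := by
    rw [Fin.val_rev, Nat.cast_sub n.2,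
      Nat.cast_sub (Nat.one_le_iff_ne_zero.2
        (Nat.pos_of_ne_zero (by rintro rfl; exact n.elim0)).ne')]
    push_cast; ring
  rw [hm, hn]
  simp only [map_add, map_mul, Complex.conj_I, Complex.conj_ofReal, map_natCast]
  ring

lemma double_sum_rev {M N : ℕ} (f : Fin M → Fin N → ℂ) :
    (∑ m : Fin M, ∑ n : Fin N, f m.rev n.rev) = ∑ m : Fin M, ∑ n : Fin N, f m n := by
  rw [Fintype.sum_bijective Fin.rev Fin.rev_bijective
    (fun m : Fin M => ∑ n : Fin N, f m.rev n.rev)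
    (fun m : Fin M => ∑ n : Fin N, f m n.rev) (fun m => rfl)]
  exact Finset.sum_congr rfl fun m _ =>
    Fintype.sum_bijective Fin.rev Fin.rev_bijective _ _ (fun n => rfl)

lemma field_split {M N : ℕ} (W1 W2 : Fin M → Fin N → ℂ) (ψy ψz : ℝ) :
    fieldF (fun m => Fin.append (fun j => W1 m j) (fun j => W2 m j)) ψy ψz
      = fieldF W1 ψy ψz
        + Complex.exp (Complex.I * (((N : ℕ) : ℂ) * (ψy : ℂ))) * fieldF W2 ψy ψz := by
  simp only [fieldF, Fin.sum_univ_add, Fin.append_left, Fin.append_right, steer_cast, steer_nat]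
  rw [Finset.sum_add_distrib]
  congr 1
  rw [Finset.mul_sum]
  refine Finset.sum_congr rfl fun m _ => ?_
  rw [Finset.mul_sum]
  exact Finset.sum_congr rfl fun n _ => by ring

lemma field_revconj {M N : ℕ} (V : Fin M → Fin N → ℂ) (ψy ψz : ℝ) :
    fieldF (fun m n => (starRingEnd ℂ) (V m.rev n.rev)) ψy ψz
      = Complex.exp (Complex.I * (((N - 1 : ℕ) : ℂ) * (ψy : ℂ) + ((M - 1 : ℕ) : ℂ) * (ψz : ℂ)))
        * (starRingEnd ℂ) (fieldF V ψy ψz) := by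
  have h1 : (∑ m : Fin M, ∑ n : Fin N, (starRingEnd ℂ) (V m.rev n.rev) * steerM M N ψy ψz m n)
      = ∑ m : Fin M, ∑ n : Fin N,
          (starRingEnd ℂ) (V m n) * steerM M N ψy ψz m.rev n.rev := by
    rw [← double_sum_rev
      (fun m n => (starRingEnd ℂ) (V m n) * steerM M N ψy ψz m.rev n.rev)]
    simp [Fin.rev_rev]
  simp only [fieldF]
  rw [h1, map_sum, Finset.mul_sum]
  refine Finset.sum_congr rfl fun m _ => ?_
  rw [map_sum, Finset.mul_sum]
  refine Finset.sum_congr rfl fun n _ => ?_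
  rw [steer_rev, map_mul]
  ring

lemma field_neg {M N : ℕ} (V : Fin M → Fin N → ℂ) (ψy ψz : ℝ) :
    fieldF (fun m n => -(V m n)) ψy ψz = -fieldF V ψy ψz := by
  simp only [fieldF, neg_mul, Finset.sum_neg_distrib]

theorem asi_ura_horizontal_expansion_preserves_pattern
    (M N : ℕ) (hM : 1 ≤ M) (hN : 1 ≤ N)
    (W1A W1B : Fin M → Fin N → ℂ)
    (W2A W2B : Fin M → Fin N → ℂ)
    (h2A : W2A = fun m n => -(starRingEnd ℂ) (W1B m.rev n.rev))
    (h2B : W2B = fun m n => (starRingEnd ℂ) (W1A m.rev n.rev))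
    (WA WB : Fin M → Fin (N + N) → ℂ)
    (hA : WA = fun m => Fin.append (fun j => W1A m j) (fun j => W2A m j))
    (hB : WB = fun m => Fin.append (fun j => W1B m j) (fun j => W2B m j))
    (ψy ψz : ℝ) :
    ‖fieldF WA ψy ψz‖ ^ 2 + ‖fieldF WB ψy ψz‖ ^ 2
      = 2 * (‖fieldF W1A ψy ψz‖ ^ 2 + ‖fieldF W1B ψy ψz‖ ^ 2) := by
  set u : ℂ := Complex.exp (Complex.I * (((N : ℕ) : ℂ) * (ψy : ℂ))) with hu
  set v : ℂ := Complex.exp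
    (Complex.I * (((N - 1 : ℕ) : ℂ) * (ψy : ℂ) + ((M - 1 : ℕ) : ℂ) * (ψz : ℂ))) with hv
  have hu1 : u * (starRingEnd ℂ) u = 1 := by
    rw [hu]; exact unit_c' _ (by simp [map_mul, Complex.conj_ofReal])
  have hv1 : v * (starRingEnd ℂ) v = 1 := by
    rw [hv]; exact unit_c' _ (by simp [map_add, map_mul, Complex.conj_ofReal])
  have huv : (u * v) * (starRingEnd ℂ) (u * v) = 1 := by
    rw [map_mul]
    calc u * v * ((starRingEnd ℂ) u * (starRingEnd ℂ) v)
        = (u * (starRingEnd ℂ) u) * (v * (starRingEnd ℂ) v) := by ring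
      _ = 1 := by rw [hu1, hv1, one_mul]
  have hFA : fieldF WA ψy ψz
      = fieldF W1A ψy ψz - (u * v) * (starRingEnd ℂ) (fieldF W1B ψy ψz) := by
    rw [hA, field_split, h2A, field_neg, field_revconj]
    ring
  have hFB : fieldF WB ψy ψz
      = fieldF W1B ψy ψz + (u * v) * (starRingEnd ℂ) (fieldF W1A ψy ψz) := by
    rw [hB, field_split, h2B, field_revconj]
    ring
  rw [hFA, hFB]
  exact key_abs _ _ _ huv
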